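/- For N > 2s with s ∈ (0,1), the map α ↦ γ_α := 2^{2s} · Γ((N+2s+2α)/4)Γ((N+2s-2α)/4) / (Γ((N-2s-2α)/4)Γ((N-2s+2α)/4)) is strictly decreasing on the interval [0, (N-2s)/2). -/
import Mathlib

open Real Filter Finset Topology

private lemma gammaSeq_pair (c x : ℝ) (n : ℕ) (hn : 0 < n) :
    Real.GammaSeq (c + x) n * Real.GammaSeq (c - x) n =
      ((n : ℝ) ^ (2 * c) * ((n.factorial : ℝ)) ^ 2) /
        ∏ i ∈ range (n + 1), ((c + (i : ℝ)) ^ 2 - x ^ 2) := by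
  have h1 : ∏ i ∈ range (n + 1), ((c + (i : ℝ)) ^ 2 - x ^ 2)
      = (∏ i ∈ range (n + 1), (c + x + (i : ℝ))) *
        ∏ i ∈ range (n + 1), (c - x + (i : ℝ)) := by
    rw [← prod_mul_distrib]
    exact prod_congr rfl fun i _ => by ring
  have h2 : (n : ℝ) ^ (2 * c) = (n : ℝ) ^ (c + x) * (n : ℝ) ^ (c - x) := by
    rw [← Real.rpow_add (by exact_mod_cast hn)]; ring_nf
  rw [Real.GammaSeq, Real.GammaSeq, h1, h2]; ring

set_option maxHeartbeats 2000000 in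
private lemma gamma_prod_lt (a b x1 x2 : ℝ) (hb : 0 < b) (hab : b < a)
    (hx1 : 0 ≤ x1) (h12 : x1 < x2) (h2b : x2 < b) :
    Real.Gamma (a + x2) * Real.Gamma (a - x2) * (Real.Gamma (b + x1) * Real.Gamma (b - x1)) <
      Real.Gamma (a + x1) * Real.Gamma (a - x1) * (Real.Gamma (b + x2) * Real.Gamma (b - x2)) := by
  have hx2 : 0 ≤ x2 := le_trans hx1 h12.le
  have h1b : x1 < b := lt_trans h12 h2b
  set q : ℝ := ((b ^ 2 - x2 ^ 2) * (a ^ 2 - x1 ^ 2)) / ((a ^ 2 - x2 ^ 2) * (b ^ 2 - x1 ^ 2)) with hq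
  -- positivity facts
  have hax2 : 0 < a ^ 2 - x2 ^ 2 := by nlinarith
  have hbx1 : 0 < b ^ 2 - x1 ^ 2 := by nlinarith
  have hbx2 : 0 < b ^ 2 - x2 ^ 2 := by nlinarith
  have hax1 : 0 < a ^ 2 - x1 ^ 2 := by nlinarith
  have hq1 : q < 1 := by
    rw [hq, div_lt_one (by positivity)]
    nlinarith [mul_pos (show (0:ℝ) < a ^ 2 - b ^ 2 by nlinarith)
      (show (0:ℝ) < x2 ^ 2 - x1 ^ 2 by nlinarith)]
  -- key inequality for GammaSeq, n ≥ 1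
  have key : ∀ n : ℕ, 1 ≤ n →
      Real.GammaSeq (a + x2) n * Real.GammaSeq (a - x2) n *
        (Real.GammaSeq (b + x1) n * Real.GammaSeq (b - x1) n) ≤
      q * (Real.GammaSeq (a + x1) n * Real.GammaSeq (a - x1) n *
        (Real.GammaSeq (b + x2) n * Real.GammaSeq (b - x2) n)) := by
    intro n hn
    have hn0 : 0 < n := hn
    rw [gammaSeq_pair a x2 n hn0, gammaSeq_pair a x1 n hn0,
      gammaSeq_pair b x1 n hn0, gammaSeq_pair b x2 n hn0]
    set C : ℝ := (n : ℝ) ^ (2 * a) * ((n.factorial : ℝ)) ^ 2 with hC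
    set C' : ℝ := (n : ℝ) ^ (2 * b) * ((n.factorial : ℝ)) ^ 2 with hC'
    have hCpos : 0 < C := by
      have : (0:ℝ) < (n:ℝ) := by exact_mod_cast hn0
      positivity
    have hC'pos : 0 < C' := by
      have : (0:ℝ) < (n:ℝ) := by exact_mod_cast hn0
      positivity
    set Pa1 : ℝ := ∏ i ∈ range (n + 1), ((a + (i : ℝ)) ^ 2 - x1 ^ 2) with hPa1
    set Pa2 : ℝ := ∏ i ∈ range (n + 1), ((a + (i : ℝ)) ^ 2 - x2 ^ 2) with hPa2
    set Pb1 : ℝ := ∏ i ∈ range (n + 1), ((b + (i : ℝ)) ^ 2 - x1 ^ 2) with hPb1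
    set Pb2 : ℝ := ∏ i ∈ range (n + 1), ((b + (i : ℝ)) ^ 2 - x2 ^ 2) with hPb2
    have hterm : ∀ (c y : ℝ), 0 < c → y < c → 0 ≤ y → ∀ i : ℕ,
        0 < (c + (i : ℝ)) ^ 2 - y ^ 2 := by
      intro c y hc hyc hy i
      have : (0:ℝ) ≤ (i : ℝ) := Nat.cast_nonneg i
      nlinarith
    have hPa1pos : 0 < Pa1 := prod_pos fun i _ => hterm a x1 (hb.trans hab) (h1b.trans hab) hx1 i
    have hPa2pos : 0 < Pa2 := prod_pos fun i _ => hterm a x2 (hb.trans hab) (h2b.trans hab) hx2 i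
    have hPb1pos : 0 < Pb1 := prod_pos fun i _ => hterm b x1 hb h1b hx1 i
    have hPb2pos : 0 < Pb2 := prod_pos fun i _ => hterm b x2 hb h2b hx2 i
    -- core polynomial inequality
    have core : (a ^ 2 - x2 ^ 2) * (b ^ 2 - x1 ^ 2) * (Pa1 * Pb2) ≤
        (b ^ 2 - x2 ^ 2) * (a ^ 2 - x1 ^ 2) * (Pa2 * Pb1) := by
      have e1 : Pa1 * Pb2 =
          (∏ i ∈ range n, (((a + (i : ℝ) + 1) ^ 2 - x1 ^ 2) * ((b + (i : ℝ) + 1) ^ 2 - x2 ^ 2))) *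
          ((a ^ 2 - x1 ^ 2) * (b ^ 2 - x2 ^ 2)) := by
        rw [hPa1, hPb2, ← prod_mul_distrib,
          prod_range_succ' (fun i : ℕ => ((a + (i : ℝ)) ^ 2 - x1 ^ 2) * ((b + (i : ℝ)) ^ 2 - x2 ^ 2)) n]
        congr 1
        · exact prod_congr rfl fun i _ => by push_cast; ring
        · norm_num
      have e2 : Pa2 * Pb1 =
          (∏ i ∈ range n, (((a + (i : ℝ) + 1) ^ 2 - x2 ^ 2) * ((b + (i : ℝ) + 1) ^ 2 - x1 ^ 2))) *
          ((a ^ 2 - x2 ^ 2) * (b ^ 2 - x1 ^ 2)) := by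
        rw [hPa2, hPb1, ← prod_mul_distrib,
          prod_range_succ' (fun i : ℕ => ((a + (i : ℝ)) ^ 2 - x2 ^ 2) * ((b + (i : ℝ)) ^ 2 - x1 ^ 2)) n]
        congr 1
        · exact prod_congr rfl fun i _ => by push_cast; ring
        · norm_num
      have hprodle :
          (∏ i ∈ range n, (((a + (i : ℝ) + 1) ^ 2 - x1 ^ 2) * ((b + (i : ℝ) + 1) ^ 2 - x2 ^ 2))) ≤
          (∏ i ∈ range n, (((a + (i : ℝ) + 1) ^ 2 - x2 ^ 2) * ((b + (i : ℝ) + 1) ^ 2 - x1 ^ 2))) := by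
        apply Finset.prod_le_prod
        · intro i _
          have hi : (0:ℝ) ≤ (i : ℝ) := Nat.cast_nonneg i
          have h1 : 0 < (a + (i : ℝ) + 1) ^ 2 - x1 ^ 2 := by nlinarith
          have h2 : 0 < (b + (i : ℝ) + 1) ^ 2 - x2 ^ 2 := by nlinarith
          positivity
        · intro i _
          have hi : (0:ℝ) ≤ (i : ℝ) := Nat.cast_nonneg i
          nlinarith [mul_nonneg (show (0:ℝ) ≤ (a + (i:ℝ) + 1) ^ 2 - (b + (i:ℝ) + 1) ^ 2 by nlinarith)
            (show (0:ℝ) ≤ x2 ^ 2 - x1 ^ 2 by nlinarith)]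
      rw [e1, e2]
      set Q1 := ∏ i ∈ range n, (((a + (i : ℝ) + 1) ^ 2 - x1 ^ 2) * ((b + (i : ℝ) + 1) ^ 2 - x2 ^ 2))
      set Q2 := ∏ i ∈ range n, (((a + (i : ℝ) + 1) ^ 2 - x2 ^ 2) * ((b + (i : ℝ) + 1) ^ 2 - x1 ^ 2))
      have hK : (0:ℝ) ≤ (a ^ 2 - x2 ^ 2) * (b ^ 2 - x1 ^ 2) * ((a ^ 2 - x1 ^ 2) * (b ^ 2 - x2 ^ 2)) := by
        positivity
      calc (a ^ 2 - x2 ^ 2) * (b ^ 2 - x1 ^ 2) * (Q1 * ((a ^ 2 - x1 ^ 2) * (b ^ 2 - x2 ^ 2)))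
          = ((a ^ 2 - x2 ^ 2) * (b ^ 2 - x1 ^ 2) * ((a ^ 2 - x1 ^ 2) * (b ^ 2 - x2 ^ 2))) * Q1 := by
            ring
        _ ≤ ((a ^ 2 - x2 ^ 2) * (b ^ 2 - x1 ^ 2) * ((a ^ 2 - x1 ^ 2) * (b ^ 2 - x2 ^ 2))) * Q2 :=
            mul_le_mul_of_nonneg_left hprodle hK
        _ = (b ^ 2 - x2 ^ 2) * (a ^ 2 - x1 ^ 2) * (Q2 * ((a ^ 2 - x2 ^ 2) * (b ^ 2 - x1 ^ 2))) := by
            ring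
    -- conclude the GammaSeq inequality
    rw [hq, div_mul_div_comm, div_mul_div_comm, div_mul_div_comm,
      div_le_div_iff₀ (by positivity) (by positivity)]
    calc C * C' * ((a ^ 2 - x2 ^ 2) * (b ^ 2 - x1 ^ 2) * (Pa1 * Pb2))
        = (C * C') * ((a ^ 2 - x2 ^ 2) * (b ^ 2 - x1 ^ 2) * (Pa1 * Pb2)) := by ring
      _ ≤ (C * C') * ((b ^ 2 - x2 ^ 2) * (a ^ 2 - x1 ^ 2) * (Pa2 * Pb1)) := by
          exact mul_le_mul_of_nonneg_left core (by positivity)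
      _ = (b ^ 2 - x2 ^ 2) * (a ^ 2 - x1 ^ 2) * (C * C') * (Pa2 * Pb1) := by ring
  -- pass to the limit
  have t2 : Tendsto (fun n => Real.GammaSeq (a + x2) n * Real.GammaSeq (a - x2) n *
      (Real.GammaSeq (b + x1) n * Real.GammaSeq (b - x1) n)) atTop
      (𝓝 (Real.Gamma (a + x2) * Real.Gamma (a - x2) *
        (Real.Gamma (b + x1) * Real.Gamma (b - x1)))) :=
    ((Real.GammaSeq_tendsto_Gamma _).mul (Real.GammaSeq_tendsto_Gamma _)).mul
      ((Real.GammaSeq_tendsto_Gamma _).mul (Real.GammaSeq_tendsto_Gamma _))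
  have t1 : Tendsto (fun n => q * (Real.GammaSeq (a + x1) n * Real.GammaSeq (a - x1) n *
      (Real.GammaSeq (b + x2) n * Real.GammaSeq (b - x2) n))) atTop
      (𝓝 (q * (Real.Gamma (a + x1) * Real.Gamma (a - x1) *
        (Real.Gamma (b + x2) * Real.Gamma (b - x2))))) :=
    (((Real.GammaSeq_tendsto_Gamma _).mul (Real.GammaSeq_tendsto_Gamma _)).mul
      ((Real.GammaSeq_tendsto_Gamma _).mul (Real.GammaSeq_tendsto_Gamma _))).const_mul q
  have hle := le_of_tendsto_of_tendsto t2 t1 (eventually_atTop.2 ⟨1, key⟩)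
  have hGpos : 0 < Real.Gamma (a + x1) * Real.Gamma (a - x1) *
      (Real.Gamma (b + x2) * Real.Gamma (b - x2)) := by
    have g1 := Real.Gamma_pos_of_pos (show (0:ℝ) < a + x1 by nlinarith)
    have g2 := Real.Gamma_pos_of_pos (show (0:ℝ) < a - x1 by nlinarith)
    have g3 := Real.Gamma_pos_of_pos (show (0:ℝ) < b + x2 by nlinarith)
    have g4 := Real.Gamma_pos_of_pos (show (0:ℝ) < b - x2 by nlinarith)
    positivity
  calc Real.Gamma (a + x2) * Real.Gamma (a - x2) *
        (Real.Gamma (b + x1) * Real.Gamma (b - x1))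
      ≤ q * (Real.Gamma (a + x1) * Real.Gamma (a - x1) *
        (Real.Gamma (b + x2) * Real.Gamma (b - x2))) := hle
    _ < 1 * (Real.Gamma (a + x1) * Real.Gamma (a - x1) *
        (Real.Gamma (b + x2) * Real.Gamma (b - x2))) := by
        exact mul_lt_mul_of_pos_right hq1 hGpos
    _ = _ := one_mul _

/-- For `N > 2s` with `s ∈ (0,1)`, the map
`α ↦ γ_α = 2^{2s} Γ((N+2s+2α)/4)Γ((N+2s-2α)/4) / (Γ((N-2s-2α)/4)Γ((N-2s+2α)/4))`
is strictly decreasing on `[0, (N-2s)/2)`. -/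
theorem gamma_alpha_strictAntiOn (s N : ℝ) (hs : s ∈ Set.Ioo (0:ℝ) 1) (hN : 2 * s < N) :
    StrictAntiOn (fun α : ℝ =>
      2 ^ (2 * s) *
        (Real.Gamma ((N + 2 * s + 2 * α) / 4) * Real.Gamma ((N + 2 * s - 2 * α) / 4)) /
        (Real.Gamma ((N - 2 * s - 2 * α) / 4) * Real.Gamma ((N - 2 * s + 2 * α) / 4)))
      (Set.Ico (0:ℝ) ((N - 2 * s) / 2)) := by
  intro α1 hα1 α2 hα2 h12
  obtain ⟨h10, h1b⟩ := hα1
  obtain ⟨h20, h2b⟩ := hα2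
  simp only []
  set a : ℝ := (N + 2 * s) / 4 with ha
  set b : ℝ := (N - 2 * s) / 4 with hb'
  have e1 : (N + 2 * s + 2 * α1) / 4 = a + α1 / 2 := by rw [ha]; ring
  have e2 : (N + 2 * s - 2 * α1) / 4 = a - α1 / 2 := by rw [ha]; ring
  have e3 : (N - 2 * s - 2 * α1) / 4 = b - α1 / 2 := by rw [hb']; ring
  have e4 : (N - 2 * s + 2 * α1) / 4 = b + α1 / 2 := by rw [hb']; ring
  have f1 : (N + 2 * s + 2 * α2) / 4 = a + α2 / 2 := by rw [ha]; ring
  have f2 : (N + 2 * s - 2 * α2) / 4 = a - α2 / 2 := by rw [ha]; ring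
  have f3 : (N - 2 * s - 2 * α2) / 4 = b - α2 / 2 := by rw [hb']; ring
  have f4 : (N - 2 * s + 2 * α2) / 4 = b + α2 / 2 := by rw [hb']; ring
  rw [e1, e2, e3, e4, f1, f2, f3, f4]
  have hbpos : 0 < b := by rw [hb']; linarith
  have hab : b < a := by rw [ha, hb']; linarith [hs.1]
  have hx1 : (0:ℝ) ≤ α1 / 2 := by linarith
  have hx12 : α1 / 2 < α2 / 2 := by linarith
  have hx2b : α2 / 2 < b := by rw [hb']; linarith
  have main := gamma_prod_lt a b (α1 / 2) (α2 / 2) hbpos hab hx1 hx12 hx2b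
  have hQ1 : 0 < Real.Gamma (b - α1 / 2) * Real.Gamma (b + α1 / 2) := by
    have g1 := Real.Gamma_pos_of_pos (show (0:ℝ) < b - α1 / 2 by linarith)
    have g2 := Real.Gamma_pos_of_pos (show (0:ℝ) < b + α1 / 2 by linarith)
    positivity
  have hQ2 : 0 < Real.Gamma (b - α2 / 2) * Real.Gamma (b + α2 / 2) := by
    have g1 := Real.Gamma_pos_of_pos (show (0:ℝ) < b - α2 / 2 by linarith)
    have g2 := Real.Gamma_pos_of_pos (show (0:ℝ) < b + α2 / 2 by linarith)
    positivity
  have h2pow : (0:ℝ) < 2 ^ (2 * s) := Real.rpow_pos_of_pos (by norm_num) _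
  rw [div_lt_div_iff₀ hQ2 hQ1]
  nlinarith [mul_lt_mul_of_pos_left main h2pow]
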